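/- Let x : ℕ → ℝ, ε ≥ 0, and let i < k < j be natural number indices. The line segment from (i, x i) to (j, x j) approximates the sample at index k within ε, i.e. |x k − (x i + ((k − i)/(j − i))·(x j − x i))| ≤ ε, if and only if its slope (x j − x i)/(j − i) lies in the closed interval [(x k − ε − x i)/(k − i), (x k + ε − x i)/(k − i)]. -/

import Mathlib

theorem stmt_9 (x : ℕ → ℝ) (ε : ℝ) (hε : 0 ≤ ε) (i k j : ℕ) (hik : i < k) (hkj : k < j) :
    |x k - (x i + (((k : ℝ) - (i : ℝ)) / ((j : ℝ) - (i : ℝ))) * (x j - x i))| ≤ ε ↔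
      (x j - x i) / ((j : ℝ) - (i : ℝ)) ∈
        Set.Icc ((x k - ε - x i) / ((k : ℝ) - (i : ℝ)))
          ((x k + ε - x i) / ((k : ℝ) - (i : ℝ))) := by
  have ha : (0:ℝ) < (k:ℝ) - (i:ℝ) := by
    have : (i:ℝ) < (k:ℝ) := by exact_mod_cast hik
    linarith
  have hb : (0:ℝ) < (j:ℝ) - (i:ℝ) := by
    have : (i:ℝ) < (j:ℝ) := by exact_mod_cast hik.trans hkj
    linarith
  have hD : ((k:ℝ) - (i:ℝ)) / ((j:ℝ) - (i:ℝ)) * (x j - x i) * ((j:ℝ) - (i:ℝ)) =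
      (x j - x i) * ((k:ℝ) - (i:ℝ)) := by
    field_simp
  rw [abs_le, Set.mem_Icc, div_le_div_iff₀ ha hb, div_le_div_iff₀ hb ha]
  constructor <;> rintro ⟨h1, h2⟩ <;> constructor <;>
    nlinarith [mul_le_mul_of_nonneg_right h1 hb.le, mul_le_mul_of_nonneg_right h2 hb.le,
      mul_pos ha hb, hD]
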